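/- Let δ be a semidegree on ℂ(x,y) with generic degree-wise Puiseux series φ(x) + ξx^r. Let ψ₁, ψ₂ be degree-wise Puiseux series and g_i := ∏_{ψ_{ij} conjugate of ψ_i} (y − ψ_{ij}(x)) ∈ ℂ((x⁻¹))*[y] for i = 1, 2. Set ε_{ij} := deg_x(φ(x) + ξx^r − ψ_{ij}(x)) and ε_i := min_j ε_{ij}. If ε₁ ≥ ε₂, then δ(g₁)/deg_y(g₁) ≥ δ(g₂)/deg_y(g₂). -/

import Mathlib

open Polynomial

noncomputable section

open scoped Classical

/-! ### Degree-wise Puiseux series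

A degree-wise Puiseux series `∑_{j ≤ k} a_j x^{j/p}` in `x` is encoded as a Hahn series in
`t = x⁻¹` over `ℚ`: the coefficient of `x^a` is the Hahn-series coefficient at the
exponent `-a`. -/

/-- The field of "generalized" degree-wise Puiseux series in `x` (Hahn series in `x⁻¹`). -/
abbrev DPS : Type := HahnSeries ℚ ℂ

/-- The series `x`. -/
def xSer : DPS := HahnSeries.single (-1 : ℚ) (1 : ℂ)

/-- The series `x ^ r` for a rational number `r`. -/
def xPow (r : ℚ) : DPS := HahnSeries.single (-r) (1 : ℂ)

/-- `f` lies in `ℂ((x^{-1/p}))`. -/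
def BddDenom (p : ℕ) (f : DPS) : Prop := ∀ q ∈ f.support, ∃ j : ℤ, q = (j : ℚ) / (p : ℚ)

/-- `f` is an honest degree-wise Puiseux series (bounded denominators). -/
def IsDPS (f : DPS) : Prop := ∃ p : ℕ, 0 < p ∧ BddDenom p f

/-- The polydromy order of a degree-wise Puiseux series: the smallest `p ≥ 1` with
`f ∈ ℂ((x^{-1/p}))`. -/
def polydromy (f : DPS) : ℕ := sInf {p : ℕ | 0 < p ∧ BddDenom p f}

/-- The `x`-degree of a degree-wise Puiseux series. -/
def degx (f : DPS) : ℚ := -f.order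

/-- Twist of `f` by `z`: the term `a x^{j/p}` becomes `a z^j x^{j/p}`.  For `z` a `p`-th
root of unity (with `p` the polydromy order of `f`) this is a conjugate of `f`. -/
def conjSer (p : ℕ) (z : ℂ) (f : DPS) : DPS :=
  ⟨fun q => z ^ (⌊-(q * (p : ℚ))⌋) * f.coeff q,
    f.isPWO_support.mono (fun q hq => by
      simp only [Function.mem_support, ne_eq] at hq ⊢
      exact fun h => hq (by rw [h, mul_zero]))⟩

/-- `ψ'` is a conjugate of the degree-wise Puiseux series `ψ`. -/
def IsConjugate (ψ ψ' : DPS) : Prop :=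
  ∃ z : ℂ, z ^ polydromy ψ = 1 ∧ ψ' = conjSer (polydromy ψ) z ψ

/-- The product `∏_j (y - ψ_j(x))` over all the conjugates `ψ_j` of `ψ`, where `ζ` is a
primitive root of unity of order the polydromy order of `ψ`. -/
def allConjProd (ζ : ℂ) (ψ : DPS) : Polynomial DPS :=
  ∏ j ∈ Finset.range (polydromy ψ), (X - C (conjSer (polydromy ψ) (ζ ^ (j + 1)) ψ))

/-! ### Polynomials in `x, y` -/

/-- `ℂ[x,y]`, with `y` the outer variable. -/
abbrev PolyXY : Type := Polynomial (Polynomial ℂ)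

/-- The polynomial `x`. -/
def xPoly : PolyXY := C Polynomial.X

/-- The polynomial `y`. -/
def yPoly : PolyXY := X

/-- The inclusion `ℂ[x] → ℂ⟪x⁻¹⟫`. -/
def toDPSc : Polynomial ℂ →+* DPS := Polynomial.eval₂RingHom HahnSeries.C xSer

/-- The inclusion `ℂ[x,y] → ℂ⟪x⁻¹⟫[y]`. -/
def toDPS : PolyXY →+* Polynomial DPS := Polynomial.mapRingHom toDPSc

/-- An element of `ℂ⟪x⁻¹⟫[y]` is (the image of) a polynomial in `(x,y)`. -/
def IsPolynomialForm (g : Polynomial DPS) : Prop := ∃ F : PolyXY, g = toDPS F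

/-- Evaluation of `f ∈ ℂ[x,y]` at a point of `ℂ²`. -/
def evalXY (f : PolyXY) (p : ℂ × ℂ) : ℂ := (f.map (Polynomial.evalRingHom p.1)).eval p.2

/-- The total degree of `f ∈ ℂ[x,y]` in `(x,y)`. -/
def totalDegN (f : PolyXY) : ℕ := f.support.sup fun b => (f.coeff b).natDegree + b

/-! ### Truncations and Puiseux pairs -/

/-- `[f]_{>r}`: the sum of the terms of `f` of `x`-degree strictly greater than `r`. -/
def truncGT (r : ℚ) (f : DPS) : DPS :=
  ⟨fun q => if q < -r then f.coeff q else 0,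
    f.isPWO_support.mono (fun q hq => by
      simp only [Function.mem_support, ne_eq] at hq ⊢
      exact fun h => hq (by simp [h]))⟩

/-- `[f]_{≥r}`: the sum of the terms of `f` of `x`-degree at least `r`. -/
def truncGE (r : ℚ) (f : DPS) : DPS :=
  ⟨fun q => if q ≤ -r then f.coeff q else 0,
    f.isPWO_support.mono (fun q hq => by
      simp only [Function.mem_support, ne_eq] at hq ⊢
      exact fun h => hq (by simp [h]))⟩

/-- The product of the second components of a list of pairs. -/
def prodP (l : List (ℤ × ℕ)) : ℕ := (l.map Prod.snd).prod

/-- `charExp l j` is the `(j+1)`-st characteristic exponent `q_{j+1}/(p_1 ⋯ p_{j+1})`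
determined by the list of (formal) Puiseux pairs `l`. -/
def charExp (l : List (ℤ × ℕ)) (j : ℕ) : ℚ :=
  (((l.getD j (0, 1)).1 : ℚ)) / (prodP (l.take (j + 1)) : ℚ)

/-- `l = [(q_1,p_1),…,(q_k,p_k)]` is the list of Puiseux pairs of `φ`. -/
def HasPuiseuxPairs (φ : DPS) (l : List (ℤ × ℕ)) : Prop :=
  (∀ pr ∈ l, 2 ≤ pr.2 ∧ Int.gcd pr.1 (pr.2 : ℤ) = 1) ∧
  polydromy φ = prodP l ∧
  ∀ j < l.length,
    BddDenom (prodP (l.take j)) (truncGT (charExp l j) φ) ∧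
    ¬ BddDenom (prodP (l.take j)) (truncGE (charExp l j) φ)

/-- The last element of a list of pairs (junk value `(0,1)` for the empty list). -/
def lastPair (l : List (ℤ × ℕ)) : ℤ × ℕ := l.getLast?.getD (0, 1)

/-! ### Semidegrees via generic degree-wise Puiseux series -/

/-- The data `(p̃, φ, r)` of a semidegree `δ` on `ℂ(x,y)` with `δ(x) = p̃ > 0`:
its generic degree-wise Puiseux series is `φ(x) + ξ x^r`. -/
structure SemidegreeData where
  /-- `p̃ = δ(x)`. -/
  ptilde : ℕ
  hpos : 0 < ptilde
  /-- `φ(x) ∈ ℂ[x^{1/p̃}, x^{-1/p̃}]`. -/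
  phi : DPS
  /-- the exponent of the generic term. -/
  r : ℚ
  hden : BddDenom ptilde phi
  hfin : phi.support.Finite
  hrden : ∃ j : ℤ, r = (j : ℚ) / (ptilde : ℚ)
  hr : ∀ q ∈ phi.support, q < -r

/-- Substitution `y := φ(x) + ξ x^r` into an element of `ℂ⟪x⁻¹⟫[y]`; the result is a
polynomial in the indeterminate `ξ` with degree-wise Puiseux series coefficients. -/
def SemidegreeData.subst (D : SemidegreeData) (g : Polynomial DPS) : Polynomial DPS :=
  Polynomial.eval₂ Polynomial.C (Polynomial.C D.phi + Polynomial.C (xPow D.r) * Polynomial.X) g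

/-- The `x`-degree of a polynomial in `ξ` with degree-wise Puiseux series coefficients. -/
def pdegx (h : Polynomial DPS) : ℚ :=
  if hh : h.support.Nonempty then h.support.sup' hh fun j => degx (h.coeff j) else 0

/-- The value `δ(g) = δ(x) · deg_x (g|_{y = φ(x) + ξ x^r})` of the semidegree on an
element of `ℂ⟪x⁻¹⟫[y]`. -/
def SemidegreeData.val (D : SemidegreeData) (g : Polynomial DPS) : ℚ :=
  (D.ptilde : ℚ) * pdegx (D.subst g)

/-- The value of the semidegree on a polynomial in `(x,y)`. -/
def SemidegreeData.valP (D : SemidegreeData) (f : PolyXY) : ℚ := D.val (toDPS f)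

/-- The (integer) value of the semidegree on a polynomial in `(x,y)`. -/
def SemidegreeData.deg (D : SemidegreeData) (f : PolyXY) : ℤ := ⌊D.valP f⌋

/-- `lc_i(f)`: the coefficient of `x^{δ̃(f)}` in `f|_{y = φ(x) + ξ x^r}`, a polynomial
in `ξ`. -/
def SemidegreeData.lcXi (D : SemidegreeData) (f : PolyXY) : Polynomial ℂ :=
  ∑ j ∈ (D.subst (toDPS f)).support,
    Polynomial.monomial j (((D.subst (toDPS f)).coeff j).coeff (-(pdegx (D.subst (toDPS f)))))

/-! ### Key forms -/

/-- The key forms `f_0 = x, f_1 = y, f_2, …, f_n` of a semidegree: each subsequent key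
form lies in `ℂ[f_0, f_0⁻¹, f_1, …, f_k]` and has `δ`-value smaller than the expected
value. -/
structure KeyForms (D : SemidegreeData) where
  /-- index of the last key form. -/
  n : ℕ
  hn : 1 ≤ n
  /-- the key forms (elements of `ℂ[x,x⁻¹,y] ⊆ ℂ⟪x⁻¹⟫[y]`). -/
  f : ℕ → Polynomial DPS
  h0 : f 0 = Polynomial.C xSer
  h1 : f 1 = Polynomial.X
  hrec : ∀ k, 1 ≤ k → k < n → ∃ (m : ℕ) (g : Polynomial DPS), 1 ≤ m ∧
    g ∈ Subring.closure (insert (Polynomial.C (xPow (-1))) (f '' Set.Iic k)) ∧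
    f (k + 1) = f k ^ m - g ∧
    D.val (f (k + 1)) < (m : ℚ) * D.val (f k)

/-- All the key forms of the semidegree `D` are polynomials. -/
def AllKeyFormsPolynomial (D : SemidegreeData) : Prop :=
  ∀ K : KeyForms D, ∀ k ≤ K.n, IsPolynomialForm (K.f k)

/-- `D` is a formal-Puiseux-pairs presentation `((q_1,p_1),…,(q_{l+1},p_{l+1}))` of the
generic degree-wise Puiseux series `φ + ξ x^r` of a semidegree. -/
def HasFormalPuiseuxPairs (D : SemidegreeData) (l : List (ℤ × ℕ)) : Prop :=
  l ≠ [] ∧ HasPuiseuxPairs D.phi l.dropLast ∧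
  1 ≤ (lastPair l).2 ∧ Int.gcd (lastPair l).1 ((lastPair l).2 : ℤ) = 1 ∧
  D.ptilde = prodP l ∧ D.r = ((lastPair l).1 : ℚ) / (prodP l : ℚ)

/-- `F ∈ ℂ[x,y]` defines a curve with one place at infinity: all of the roots of its
degree-wise Puiseux factorization are the conjugates of a single series. -/
def OnePlaceAtInfinity (F : PolyXY) : Prop :=
  0 < F.natDegree ∧
  ∃ (ψ : DPS) (c ζ : ℂ), c ≠ 0 ∧ IsDPS ψ ∧ IsPrimitiveRoot ζ (polydromy ψ) ∧
    polydromy ψ = F.natDegree ∧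
    toDPS F = Polynomial.C (HahnSeries.C c) * allConjProd ζ ψ

/-! ### The model for sections of line bundles on surfaces in `S_pol`

On a surface `X ∈ S_pol` with curves at infinity `Γ_1, …, Γ_N` carrying semidegrees
`δ_1, …, δ_N`, the global sections of `𝒪(∑ d_j Γ_j)` are identified with the
polynomials `f ∈ ℂ[x,y]` with `δ_k(f) ≤ d_k` for all `k`, and an effective divisor
supported away from infinity is the divisor of a nonzero polynomial `h`, whose class is
`∑ δ_k(h) Γ_k`. -/

/-- The space of global sections of `𝒪(∑ d_j Γ_j)` in the polynomial model. -/
def secSetQ (N : ℕ) (D : Fin N → SemidegreeData) (d : Fin N → ℤ) : Set PolyXY :=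
  {f | f = 0 ∨ ∀ k, (D k).valP f ≤ (d k : ℚ)}

/-- Membership in the global Enriques semigroup `P^{st}(X)` in the polynomial model:
`∑ d_j Γ_j` is linearly equivalent to an effective divisor supported away from the
curves at infinity. -/
def MemEnriques (N : ℕ) (D : Fin N → SemidegreeData) (d : Fin N → ℤ) : Prop :=
  ∃ h : PolyXY, h ≠ 0 ∧ ∀ k, (D k).valP h = (d k : ℚ)

/-- The vector `δ⃗(f) = (δ_1(f), …, δ_N(f))`. -/
def degVec (N : ℕ) (D : Fin N → SemidegreeData) (f : PolyXY) : Fin N → ℤ :=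
  fun k => (D k).deg f

/-! ### The polynomials `f_ij` and the associated monomials -/

/-- The data of the polynomials `f_{ij}` of the Cox-ring theorem for a surface in
`S_pol` with semidegrees `D i` at infinity: `f_{ij}` is (a polynomial playing the role
of) the last key form of the truncated semidegree `δ_{ij}`; it defines a curve with one
place at infinity and has a degree-wise Puiseux root whose Puiseux pairs are the first
`j` formal Puiseux pairs of `δ_i` and which agrees with `φ_i` above the `(j+1)`-st
characteristic exponent. -/
structure CoxData (N : ℕ) (D : Fin N → SemidegreeData) where
  /-- `l i + 1` = number of formal Puiseux pairs of `δ_i`. -/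
  l : Fin N → ℕ
  /-- the formal Puiseux pairs of `δ_i`. -/
  pairs : Fin N → List (ℤ × ℕ)
  hpairs : ∀ i, HasFormalPuiseuxPairs (D i) (pairs i)
  hlen : ∀ i, (pairs i).length = l i + 1
  /-- the polynomials `f_{ij}`. -/
  F : (i : Fin N) → Fin (l i + 1) → PolyXY
  hone : ∀ i j, OnePlaceAtInfinity (F i j)
  hroot : ∀ i (j : Fin (l i + 1)), ∃ ψ : DPS,
    Polynomial.eval ψ (toDPS (F i j)) = 0 ∧
    HasPuiseuxPairs ψ ((pairs i).take (j : ℕ)) ∧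
    truncGT (charExp (pairs i) (j : ℕ)) ψ = truncGT (charExp (pairs i) (j : ℕ)) (D i).phi

/-- The index set of the family `f_{ij}`. -/
abbrev CoxIdx {N : ℕ} (l : Fin N → ℕ) : Type := (i : Fin N) × Fin (l i + 1)

/-- The monomial `g_{αβγ⃗} = x^α y^β ∏ f_{ij}^{γ_{ij}}`. -/
def gMon {N : ℕ} {D : Fin N → SemidegreeData} (CD : CoxData N D)
    (α β : ℕ) (γ : CoxIdx CD.l → ℕ) : PolyXY :=
  xPoly ^ α * yPoly ^ β * ∏ ij : CoxIdx CD.l, CD.F ij.1 ij.2 ^ γ ij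

/-- The set `𝓔_{d⃗}` of exponents `(α, β, γ⃗)` with
`α δ_k(x) + β δ_k(y) + ∑ γ_{ij} δ_k(f_{ij}) ≤ d_k` for all `k`. -/
def ECal {N : ℕ} {D : Fin N → SemidegreeData} (CD : CoxData N D) (d : Fin N → ℤ) :
    Set (ℕ × ℕ × (CoxIdx CD.l → ℕ)) :=
  {t | ∀ k, (t.1 : ℚ) * (D k).valP xPoly + (t.2.1 : ℚ) * (D k).valP yPoly +
      ∑ ij : CoxIdx CD.l, (t.2.2 ij : ℚ) * (D k).valP (CD.F ij.1 ij.2) ≤ (d k : ℚ)}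

/-! ### Approximate roots (for curves with one place at infinity) -/

/-- `g 0 = x, g 1, …, g (s+1) = F` behave like the system of approximate roots (in the
sense of Abhyankar–Moh) of a polynomial `F` defining a curve with one place at infinity:
each `g j` defines a curve with one place at infinity, whose degree-wise Puiseux root
has as Puiseux pairs the first `j - 1` Puiseux pairs of the root `ψ` of `F` and agrees
with `ψ` above the `j`-th characteristic exponent. -/
def IsApproxRootFamily (s : ℕ) (g : Fin (s + 2) → PolyXY) : Prop :=
  g 0 = xPoly ∧ OnePlaceAtInfinity (g (Fin.last (s + 1))) ∧
  (∀ j : Fin (s + 2), 1 ≤ (j : ℕ) → (g j).Monic) ∧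
  ∃ (ψ : DPS) (pr : List (ℤ × ℕ)),
    pr.length = s ∧
    Polynomial.eval ψ (toDPS (g (Fin.last (s + 1)))) = 0 ∧
    HasPuiseuxPairs ψ pr ∧
    ∀ j : Fin (s + 2), 1 ≤ (j : ℕ) → (j : ℕ) ≤ s →
      OnePlaceAtInfinity (g j) ∧
      ∃ ψj : DPS, Polynomial.eval ψj (toDPS (g j)) = 0 ∧
        HasPuiseuxPairs ψj (pr.take ((j : ℕ) - 1)) ∧
        truncGT (charExp pr ((j : ℕ) - 1)) ψj = truncGT (charExp pr ((j : ℕ) - 1)) ψ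


/-! ### The Cox ring model -/

/-- The ambient ring in which the Cox ring `𝓡(X) = ⊕_{d⃗ ∈ ℤ^N} Γ(X, 𝒪(∑ d_j Γ_j))`
is realized: an element `(f)_{d⃗}` of the `d⃗`-th graded piece is `single d⃗ f`. -/
abbrev CoxRing (N : ℕ) : Type := AddMonoidAlgebra PolyXY (Fin N → ℤ)

/-- The set of homogeneous elements of the Cox ring: a section `f ∈ Γ(X, 𝒪(∑ d_j Γ_j))`
placed in degree `d⃗`.  The Cox ring itself is the `ℂ`-span of this set. -/
def coxHomSet (N : ℕ) (D : Fin N → SemidegreeData) : Set (CoxRing N) :=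
  {z | ∃ (d : Fin N → ℤ) (f : PolyXY), f ∈ secSetQ N D d ∧ z = AddMonoidAlgebra.single d f}

/-! ### Statement 19: the comparison lemma for semidegrees -/

/-- `deg_x (φ(x) + ξ x^r − ψ'(x))` for an indeterminate `ξ`: the `x`-degree of the
polynomial `(φ − ψ') + x^r · ξ` in `ξ` with degree-wise Puiseux series coefficients. -/
def epsilonOf (D : SemidegreeData) (ψ' : DPS) : ℚ :=
  pdegx (Polynomial.C (D.phi - ψ') + Polynomial.C (xPow D.r) * Polynomial.X)

namespace StmtAux

open Polynomial HahnSeries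

/-! #### Basic `degx` facts -/

lemma order_ge_of_forall {f : DPS} {s : ℚ} (hf : f ≠ 0) (h : ∀ q, q < s → f.coeff q = 0) :
    s ≤ f.order := by
  by_contra hlt
  exact (mt HahnSeries.coeff_order_eq_zero.mp hf) (h _ (not_le.mp hlt))

lemma degx_le_iff {f : DPS} (hf : f ≠ 0) {c : ℚ} :
    degx f ≤ c ↔ ∀ q, q < -c → f.coeff q = 0 := by
  constructor
  · intro h q hq
    apply HahnSeries.coeff_eq_zero_of_lt_order
    have h' : -f.order ≤ c := h
    linarith
  · intro h
    have := order_ge_of_forall hf h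
    simp only [degx]
    linarith

lemma degx_ge_of_coeff_ne {f : DPS} {q : ℚ} (h : f.coeff q ≠ 0) : -q ≤ degx f := by
  have := HahnSeries.order_le_of_coeff_ne_zero h
  simp only [degx]
  linarith

lemma hs_mul_coeff_lt {a b : DPS} {s t : ℚ} (ha : ∀ q, q < s → a.coeff q = 0)
    (hb : ∀ q, q < t → b.coeff q = 0) {q : ℚ} (hq : q < s + t) : (a * b).coeff q = 0 := by
  rcases eq_or_ne a 0 with rfl | h0
  · simp
  rcases eq_or_ne b 0 with rfl | h1
  · simp
  apply HahnSeries.coeff_eq_zero_of_lt_order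
  rw [HahnSeries.order_mul h0 h1]
  have hsa := order_ge_of_forall h0 ha
  have htb := order_ge_of_forall h1 hb
  linarith

lemma hs_mul_coeff_top {a b : DPS} {s t : ℚ} (ha : ∀ q, q < s → a.coeff q = 0)
    (hb : ∀ q, q < t → b.coeff q = 0) :
    (a * b).coeff (s + t) = a.coeff s * b.coeff t := by
  rcases eq_or_ne a 0 with rfl | h0
  · simp
  rcases eq_or_ne b 0 with rfl | h1
  · simp
  have hsa := order_ge_of_forall h0 ha
  have htb := order_ge_of_forall h1 hb
  rcases eq_or_lt_of_le hsa with he | hlt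
  · rcases eq_or_lt_of_le htb with he2 | hlt2
    · rw [he, he2, HahnSeries.coeff_mul_order_add_order,
        HahnSeries.leadingCoeff_eq, HahnSeries.leadingCoeff_eq]
    · rw [HahnSeries.coeff_eq_zero_of_lt_order (by rw [HahnSeries.order_mul h0 h1]; linarith),
        HahnSeries.coeff_eq_zero_of_lt_order hlt2, mul_zero]
  · rw [HahnSeries.coeff_eq_zero_of_lt_order (by rw [HahnSeries.order_mul h0 h1]; linarith),
      HahnSeries.coeff_eq_zero_of_lt_order hlt, zero_mul]

lemma hs_coeff_sum {ι : Type*} (s : Finset ι) (f : ι → DPS) (g : ℚ) :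
    (∑ x ∈ s, f x).coeff g = ∑ x ∈ s, (f x).coeff g :=
  map_sum (HahnSeries.coeff.addMonoidHom g) f s

/-! #### `pdegx` facts -/

lemma pdegx_coeff_le {h : Polynomial DPS} {k : ℕ} (hk : h.coeff k ≠ 0) :
    degx (h.coeff k) ≤ pdegx h := by
  have hk' : k ∈ h.support := Polynomial.mem_support_iff.mpr hk
  rw [pdegx, dif_pos ⟨k, hk'⟩]
  exact Finset.le_sup' (fun j => degx (h.coeff j)) hk'

lemma pdegx_exists {h : Polynomial DPS} (hh : h ≠ 0) :
    ∃ k, h.coeff k ≠ 0 ∧ degx (h.coeff k) = pdegx h := by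
  have hs : h.support.Nonempty := Polynomial.nonempty_support_iff.mpr hh
  obtain ⟨k, hk, he⟩ := Finset.exists_mem_eq_sup' (H := hs) (fun j => degx (h.coeff j))
  exact ⟨k, Polynomial.mem_support_iff.mp hk, by rw [pdegx, dif_pos hs, he]⟩

lemma pdegx_le {h : Polynomial DPS} {c : ℚ} (h0 : h ≠ 0)
    (hc : ∀ k, h.coeff k ≠ 0 → degx (h.coeff k) ≤ c) : pdegx h ≤ c := by
  rw [pdegx, dif_pos (Polynomial.nonempty_support_iff.mpr h0)]
  exact Finset.sup'_le _ _ fun k hk => hc k (Polynomial.mem_support_iff.mp hk)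

lemma pdegx_coeff_coeff {h : Polynomial DPS} {k : ℕ} {q : ℚ} (hq : q < -(pdegx h)) :
    (h.coeff k).coeff q = 0 := by
  rcases eq_or_ne (h.coeff k) 0 with e | e
  · simp [e]
  have h1 : degx (h.coeff k) ≤ pdegx h := pdegx_coeff_le e
  exact (degx_le_iff e).mp h1 q (by linarith)

/-! #### Initial forms and multiplicativity of `pdegx` -/

/-- The initial form at level `t`. -/
def inform (t : ℚ) (h : Polynomial DPS) : Polynomial ℂ :=
  ∑ j ∈ h.support, Polynomial.monomial j ((h.coeff j).coeff (-t))

lemma inform_coeff (t : ℚ) (h : Polynomial DPS) (k : ℕ) :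
    (inform t h).coeff k = (h.coeff k).coeff (-t) := by
  rw [inform, Polynomial.finset_sum_coeff,
    Finset.sum_eq_single k (fun j _ hj => by rw [Polynomial.coeff_monomial, if_neg hj])
      (fun hk => by rw [Polynomial.notMem_support_iff.mp hk]; simp)]
  simp [Polynomial.coeff_monomial]

lemma inform_ne_zero {h : Polynomial DPS} (hh : h ≠ 0) : inform (pdegx h) h ≠ 0 := by
  obtain ⟨k, hk, he⟩ := pdegx_exists hh
  intro h0
  have hc : (inform (pdegx h) h).coeff k = 0 := by rw [h0]; simp
  rw [inform_coeff] at hc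
  have ho : (h.coeff k).order = -(pdegx h) := by
    simp only [degx] at he
    linarith
  exact (mt HahnSeries.coeff_order_eq_zero.mp hk) (by rw [ho]; exact hc)

lemma inform_mul {h₁ h₂ : Polynomial DPS} {t₁ t₂ : ℚ} (H₁ : pdegx h₁ ≤ t₁) (H₂ : pdegx h₂ ≤ t₂) :
    inform (t₁ + t₂) (h₁ * h₂) = inform t₁ h₁ * inform t₂ h₂ := by
  ext k
  rw [inform_coeff, Polynomial.coeff_mul, Polynomial.coeff_mul, hs_coeff_sum]
  apply Finset.sum_congr rfl
  intro x _
  rw [inform_coeff, inform_coeff]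
  have e : -(t₁ + t₂) = -t₁ + -t₂ := by ring
  rw [e]
  exact hs_mul_coeff_top
    (fun q' h' => pdegx_coeff_coeff (by have := neg_le_neg H₁; linarith))
    (fun q' h' => pdegx_coeff_coeff (by have := neg_le_neg H₂; linarith))

lemma pdegx_mul {h₁ h₂ : Polynomial DPS} (H₁ : h₁ ≠ 0) (H₂ : h₂ ≠ 0) :
    pdegx (h₁ * h₂) = pdegx h₁ + pdegx h₂ := by
  have hm : h₁ * h₂ ≠ 0 := mul_ne_zero H₁ H₂
  apply le_antisymm
  · apply pdegx_le hm
    intro k hk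
    rw [degx_le_iff hk]
    intro q hq
    rw [Polynomial.coeff_mul, hs_coeff_sum]
    apply Finset.sum_eq_zero
    intro x _
    exact hs_mul_coeff_lt (fun q' h' => pdegx_coeff_coeff h')
      (fun q' h' => pdegx_coeff_coeff h') (by linarith)
  · have hne : inform (pdegx h₁ + pdegx h₂) (h₁ * h₂) ≠ 0 := by
      rw [inform_mul le_rfl le_rfl]
      exact mul_ne_zero (inform_ne_zero H₁) (inform_ne_zero H₂)
    obtain ⟨k, hk⟩ : ∃ k, (inform (pdegx h₁ + pdegx h₂) (h₁ * h₂)).coeff k ≠ 0 := by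
      by_contra hcon
      push_neg at hcon
      exact hne (Polynomial.ext fun k => by rw [hcon k]; rfl)
    rw [inform_coeff] at hk
    have h1 : (h₁ * h₂).coeff k ≠ 0 := fun e => hk (by rw [e]; simp)
    have h2 := degx_ge_of_coeff_ne hk
    have h3 := pdegx_coeff_le h1
    linarith

lemma pdegx_C {a : DPS} (ha : a ≠ 0) : pdegx (Polynomial.C a) = degx a := by
  apply le_antisymm
  · apply pdegx_le (by simpa using ha)
    intro k hk
    rcases eq_or_ne k 0 with rfl | hk0
    · simp
    · simp [Polynomial.coeff_C, hk0] at hk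
  · have : (Polynomial.C a).coeff 0 = a := Polynomial.coeff_C_zero
    simpa [this] using pdegx_coeff_le (k := 0) (h := Polynomial.C a) (by simpa [this] using ha)

lemma pdegx_one : pdegx (1 : Polynomial DPS) = 0 := by
  have h1 : (1 : Polynomial DPS) = Polynomial.C 1 := by simp
  rw [h1, pdegx_C one_ne_zero]
  simp [degx, HahnSeries.order_one]

lemma poly_prod_ne_zero {ι : Type*} (s : Finset ι) (f : ι → Polynomial DPS)
    (hf : ∀ i ∈ s, f i ≠ 0) : (∏ i ∈ s, f i) ≠ 0 := by
  induction s using Finset.cons_induction with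
  | empty => simp
  | cons a s ha ih =>
    rw [Finset.prod_cons]
    exact mul_ne_zero (hf a (Finset.mem_cons_self a s))
      (ih fun i hi => hf i (Finset.mem_cons_of_mem hi))

lemma pdegx_prod {ι : Type*} (s : Finset ι) (f : ι → Polynomial DPS)
    (hf : ∀ i ∈ s, f i ≠ 0) :
    pdegx (∏ i ∈ s, f i) = ∑ i ∈ s, pdegx (f i) := by
  induction s using Finset.cons_induction with
  | empty => simpa using pdegx_one
  | cons a s ha ih =>
    have h1 : f a ≠ 0 := hf a (Finset.mem_cons_self a s)
    have h2 : ∀ i ∈ s, f i ≠ 0 := fun i hi => hf i (Finset.mem_cons_of_mem hi)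
    have h3 : (∏ i ∈ s, f i) ≠ 0 := poly_prod_ne_zero s f h2
    rw [Finset.prod_cons, Finset.sum_cons, pdegx_mul h1 h3, ih h2]

/-! #### Linear factors -/

lemma xPow_ne_zero (r : ℚ) : xPow r ≠ 0 := HahnSeries.single_ne_zero one_ne_zero

lemma degx_xPow (r : ℚ) : degx (xPow r) = r := by
  simp [degx, xPow, HahnSeries.order_single (one_ne_zero (α := ℂ))]

lemma coeff_linear (a u : DPS) (k : ℕ) :
    (Polynomial.C a + Polynomial.C u * Polynomial.X).coeff k
      = if k = 0 then a else if k = 1 then u else 0 := by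
  rcases k with _ | _ | k <;>
    simp [Polynomial.coeff_C, Polynomial.coeff_X, Polynomial.coeff_C_mul]

lemma linear_ne_zero (a : DPS) {u : DPS} (hu : u ≠ 0) :
    Polynomial.C a + Polynomial.C u * Polynomial.X ≠ 0 := fun h => by
  have := coeff_linear a u 1
  rw [h] at this
  simp at this
  exact hu this.symm

lemma pdegx_linear {a u : DPS} (hu : u ≠ 0) :
    pdegx (Polynomial.C a + Polynomial.C u * Polynomial.X)
      = if a = 0 then degx u else max (degx a) (degx u) := by
  split_ifs with h
  · apply le_antisymm
    · apply pdegx_le (linear_ne_zero a hu)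
      intro k hk
      rw [coeff_linear] at hk ⊢
      rcases eq_or_ne k 0 with rfl | hk0
      · simp [h] at hk
      rcases eq_or_ne k 1 with rfl | hk1
      · simp
      · simp [hk0, hk1] at hk
    · have h1 : (Polynomial.C a + Polynomial.C u * Polynomial.X).coeff 1 = u := by
        rw [coeff_linear]; simp
      have := pdegx_coeff_le (k := 1) (h := Polynomial.C a + Polynomial.C u * Polynomial.X)
        (by rw [h1]; exact hu)
      rwa [h1] at this
  · apply le_antisymm
    · apply pdegx_le (linear_ne_zero a hu)
      intro k hk
      rw [coeff_linear] at hk ⊢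
      rcases eq_or_ne k 0 with rfl | hk0
      · simp [le_max_left]
      rcases eq_or_ne k 1 with rfl | hk1
      · simp [hk0, le_max_right]
      · simp [hk0, hk1] at hk
    · apply max_le
      · have h1 : (Polynomial.C a + Polynomial.C u * Polynomial.X).coeff 0 = a := by
          rw [coeff_linear]; simp
        have := pdegx_coeff_le (k := 0) (h := Polynomial.C a + Polynomial.C u * Polynomial.X)
          (by rw [h1]; exact h)
        rwa [h1] at this
      · have h1 : (Polynomial.C a + Polynomial.C u * Polynomial.X).coeff 1 = u := by
          rw [coeff_linear]; simp
        have := pdegx_coeff_le (k := 1) (h := Polynomial.C a + Polynomial.C u * Polynomial.X)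
          (by rw [h1]; exact hu)
        rwa [h1] at this

/-! #### `epsilonOf` -/

lemma epsilonOf_eq (D : SemidegreeData) (ψ' : DPS) :
    epsilonOf D ψ' = if D.phi - ψ' = 0 then D.r else max (degx (D.phi - ψ')) D.r := by
  rw [epsilonOf, pdegx_linear (xPow_ne_zero D.r), degx_xPow]

lemma r_le_epsilonOf (D : SemidegreeData) (ψ' : DPS) : D.r ≤ epsilonOf D ψ' := by
  rw [epsilonOf_eq]
  split <;> simp

lemma epsilonOf_coeff_zero {D : SemidegreeData} {ψ' : DPS} {q : ℚ}
    (hq : q < -(epsilonOf D ψ')) : (D.phi - ψ').coeff q = 0 := by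
  rw [epsilonOf_eq] at hq
  split_ifs at hq with h
  · rw [h]; rfl
  · refine (degx_le_iff h).mp (le_max_left _ _) q (by linarith)

/-! #### `subst`, `val` und `natDegree` of `allConjProd` -/

lemma subst_allConjProd (D : SemidegreeData) (ζ : ℂ) (ψ : DPS) :
    D.subst (allConjProd ζ ψ) = ∏ j ∈ Finset.range (polydromy ψ),
      (Polynomial.C (D.phi - conjSer (polydromy ψ) (ζ ^ (j + 1)) ψ)
        + Polynomial.C (xPow D.r) * Polynomial.X) := by
  have h0 : D.subst (allConjProd ζ ψ) = Polynomial.eval₂RingHom Polynomial.C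
      (Polynomial.C D.phi + Polynomial.C (xPow D.r) * Polynomial.X) (allConjProd ζ ψ) := rfl
  rw [h0, allConjProd, map_prod]
  apply Finset.prod_congr rfl
  intro j _
  have e1 : (Polynomial.eval₂RingHom Polynomial.C
      (Polynomial.C D.phi + Polynomial.C (xPow D.r) * Polynomial.X)) Polynomial.X
      = Polynomial.C D.phi + Polynomial.C (xPow D.r) * Polynomial.X :=
    Polynomial.eval₂_X _ _
  have e2 : (Polynomial.eval₂RingHom Polynomial.C
      (Polynomial.C D.phi + Polynomial.C (xPow D.r) * Polynomial.X))
      (Polynomial.C (conjSer (polydromy ψ) (ζ ^ (j + 1)) ψ))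
      = Polynomial.C (conjSer (polydromy ψ) (ζ ^ (j + 1)) ψ) :=
    Polynomial.eval₂_C _ _
  have e3 := map_sub (Polynomial.eval₂RingHom Polynomial.C
      (Polynomial.C D.phi + Polynomial.C (xPow D.r) * Polynomial.X)) Polynomial.X
      (Polynomial.C (conjSer (polydromy ψ) (ζ ^ (j + 1)) ψ))
  rw [e3, e1, e2, Polynomial.C_sub]
  ring

lemma val_allConjProd (D : SemidegreeData) (ζ : ℂ) (ψ : DPS) :
    D.val (allConjProd ζ ψ) = (D.ptilde : ℚ) * ∑ j ∈ Finset.range (polydromy ψ),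
      epsilonOf D (conjSer (polydromy ψ) (ζ ^ (j + 1)) ψ) := by
  rw [SemidegreeData.val, subst_allConjProd,
    pdegx_prod _ _ (fun j _ => linear_ne_zero _ (xPow_ne_zero D.r))]
  rfl

lemma natDegree_allConjProd (ζ : ℂ) (ψ : DPS) :
    (allConjProd ζ ψ).natDegree = polydromy ψ := by
  rw [allConjProd, Polynomial.natDegree_prod _ _ (fun j _ => Polynomial.X_sub_C_ne_zero _)]
  simp

/-! #### Conjugates -/

lemma conjSer_coeff (p : ℕ) (z : ℂ) (f : DPS) (q : ℚ) :
    (conjSer p z f).coeff q = z ^ (⌊-(q * (p : ℚ))⌋) * f.coeff q := rfl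

lemma conjSer_one (p : ℕ) (f : DPS) : conjSer p 1 f = f := by
  ext q
  rw [conjSer_coeff, one_zpow, one_mul]

lemma conjSer_comp (p : ℕ) (z w : ℂ) (f : DPS) :
    conjSer p z (conjSer p w f) = conjSer p (z * w) f := by
  ext q
  rw [conjSer_coeff, conjSer_coeff, conjSer_coeff, mul_zpow, mul_assoc]

lemma conjSer_coeff_eq_zero_iff {p : ℕ} {z : ℂ} (hz : z ≠ 0) (f : DPS) (q : ℚ) :
    (conjSer p z f).coeff q = 0 ↔ f.coeff q = 0 := by
  rw [conjSer_coeff, mul_eq_zero]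
  simp [zpow_ne_zero _ hz]

/-- The coefficients of `ψ - σ^n ψ`. -/
lemma sub_conj_coeff_ne {p : ℕ} (hp : 0 < p) {ψ : DPS} (hbdd : BddDenom p ψ)
    {ζ : ℂ} (hζ : IsPrimitiveRoot ζ p) (n : ℕ) (q : ℚ) :
    (ψ - conjSer p (ζ ^ n) ψ).coeff q ≠ 0 ↔
      (ψ.coeff q ≠ 0 ∧ ¬ ∃ m : ℤ, (n : ℚ) * q = (m : ℚ)) := by
  rw [HahnSeries.coeff_sub, conjSer_coeff]
  rcases eq_or_ne (ψ.coeff q) 0 with h0 | h0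
  · simp [h0]
  obtain ⟨k, hk⟩ := hbdd q ((HahnSeries.mem_support ψ q).mpr h0)
  have hpQ : (p : ℚ) ≠ 0 := Nat.cast_ne_zero.mpr hp.ne'
  have hq' : -(q * (p : ℚ)) = ((-k : ℤ) : ℚ) := by
    rw [hk]
    field_simp
    push_cast
    ring
  have hfl : ⌊-(q * (p : ℚ))⌋ = -k := by rw [hq', Int.floor_intCast]
  rw [hfl]
  have h1 : (ζ ^ n) ^ (-k : ℤ) = 1 ↔ (p : ℤ) ∣ (n : ℤ) * k := by
    rw [← zpow_natCast ζ n, ← zpow_mul, hζ.zpow_eq_one_iff_dvd, mul_neg, Int.dvd_neg]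
  have h2 : (∃ m : ℤ, (n : ℚ) * q = (m : ℚ)) ↔ (p : ℤ) ∣ (n : ℤ) * k := by
    constructor
    · rintro ⟨m, hm⟩
      refine ⟨m, ?_⟩
      rw [hk] at hm
      have : ((n : ℤ) * k : ℚ) = (((p : ℤ) * m : ℤ) : ℚ) := by
        push_cast
        field_simp at hm
        linarith
      exact_mod_cast this
    · rintro ⟨m, hm⟩
      refine ⟨m, ?_⟩
      rw [hk]
      have : ((n : ℤ) * k : ℚ) = (((p : ℤ) * m : ℤ) : ℚ) := by exact_mod_cast congrArg (fun z : ℤ => (z : ℚ)) hm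
      push_cast at this
      field_simp
      linarith
  constructor
  · intro hne
    refine ⟨h0, fun hex => hne ?_⟩
    rw [h1.symm.mp (h2.mp hex) ] at *
    simp
  · rintro ⟨-, hex⟩
    have hz1 : (ζ ^ n) ^ (-k : ℤ) ≠ 1 := fun he => hex (h2.mpr (h1.mp he))
    intro heq
    apply hz1
    have : (1 - (ζ ^ n) ^ (-k : ℤ)) * ψ.coeff q = 0 := by ring_nf; linear_combination heq
    rcases mul_eq_zero.mp this with h | h
    · linear_combination -h
    · exact absurd h h0

/-! #### The combinatorial bracket function -/

/-- The bracket value `max(t, c_n)` encoded combinatorially from the support. -/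
def brk (t : ℚ) (W : Finset ℚ) (n : ℕ) : ℚ :=
  if hA : (W.filter fun q => ¬ ∃ m : ℤ, (n : ℚ) * q = (m : ℚ)).Nonempty
  then -((W.filter fun q => ¬ ∃ m : ℤ, (n : ℚ) * q = (m : ℚ)).min' hA) else t

lemma brk_periodic {t : ℚ} {W : Finset ℚ} {c : ℕ}
    (hW : ∀ q ∈ W, ∃ m : ℤ, (c : ℚ) * q = (m : ℚ)) (n : ℕ) :
    brk t W (n + c) = brk t W n := by
  have hfil : (W.filter fun q => ¬ ∃ m : ℤ, ((n + c : ℕ) : ℚ) * q = (m : ℚ))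
      = W.filter fun q => ¬ ∃ m : ℤ, (n : ℚ) * q = (m : ℚ) := by
    apply Finset.filter_congr
    intro q hq
    obtain ⟨mc, hmc⟩ := hW q hq
    have : (∃ m : ℤ, ((n + c : ℕ) : ℚ) * q = (m : ℚ)) ↔ ∃ m : ℤ, (n : ℚ) * q = (m : ℚ) := by
      constructor
      · rintro ⟨m, hm⟩
        refine ⟨m - mc, ?_⟩
        push_cast at hm ⊢
        linarith
      · rintro ⟨m, hm⟩
        refine ⟨m + mc, ?_⟩
        push_cast
        linarith
    rw [this]
  rw [brk, brk, hfil]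

lemma brk_mono {t₁ t₂ : ℚ} (h12 : t₂ ≤ t₁) {W₁ W₂ : Finset ℚ}
    (hW1 : W₁ = W₂.filter fun q => q < -t₁) (hW2 : ∀ q ∈ W₂, q < -t₂) (n : ℕ) :
    brk t₂ W₂ n ≤ brk t₁ W₁ n := by
  classical
  have hmemiff : ∀ x : ℚ, (x ∈ W₁.filter fun q => ¬ ∃ m : ℤ, (n : ℚ) * q = (m : ℚ)) ↔
      (x ∈ W₂.filter fun q => ¬ ∃ m : ℤ, (n : ℚ) * q = (m : ℚ)) ∧ x < -t₁ := by
    intro x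
    simp only [hW1, Finset.mem_filter]
    tauto
  rw [brk, brk]
  split_ifs with h2 h1 h1
  · have h1m := Finset.min'_mem _ h1
    have h1m' := (hmemiff _).mp h1m
    have hle : (W₂.filter fun q => ¬ ∃ m : ℤ, (n : ℚ) * q = (m : ℚ)).min' h2 ≤
        (W₁.filter fun q => ¬ ∃ m : ℤ, (n : ℚ) * q = (m : ℚ)).min' h1 :=
      Finset.min'_le _ _ h1m'.1
    have hge : (W₁.filter fun q => ¬ ∃ m : ℤ, (n : ℚ) * q = (m : ℚ)).min' h1 ≤
        (W₂.filter fun q => ¬ ∃ m : ℤ, (n : ℚ) * q = (m : ℚ)).min' h2 := by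
      rcases lt_or_ge ((W₂.filter fun q => ¬ ∃ m : ℤ, (n : ℚ) * q = (m : ℚ)).min' h2) (-t₁)
        with hc | hc
      · exact Finset.min'_le _ _ ((hmemiff _).mpr ⟨Finset.min'_mem _ h2, hc⟩)
      · linarith [h1m'.2]
    rw [le_antisymm hle hge]
  · rcases lt_or_ge ((W₂.filter fun q => ¬ ∃ m : ℤ, (n : ℚ) * q = (m : ℚ)).min' h2) (-t₁)
        with hcon | hc
    · exact absurd ⟨_, (hmemiff _).mpr ⟨Finset.min'_mem _ h2, hcon⟩⟩ h1
    · linarith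
  · exact absurd ⟨_, ((hmemiff _).mp (Finset.min'_mem _ h1)).1⟩ h2
  · exact h12

/-! #### Periodic sums -/

lemma periodic_shift_one (h : ℕ → ℚ) (p : ℕ) (hper : ∀ n, h (n + p) = h n) :
    ∑ n ∈ Finset.range p, h (n + 1) = ∑ n ∈ Finset.range p, h n := by
  have h1 := Finset.sum_range_succ h p
  have h2 := Finset.sum_range_succ' h p
  have h3 : h p = h 0 := by simpa using hper 0
  rw [h1, h3] at h2
  linarith

lemma periodic_shift (h : ℕ → ℚ) (p : ℕ) (hper : ∀ n, h (n + p) = h n) (c : ℕ) :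
    ∑ n ∈ Finset.range p, h (n + c) = ∑ n ∈ Finset.range p, h n := by
  induction c with
  | zero => simp
  | succ c ih =>
    have hper' : ∀ n, h (n + p + c) = h (n + c) := fun n => by
      rw [show n + p + c = n + c + p by omega]
      exact hper (n + c)
    have hshift := periodic_shift_one (fun n => h (n + c)) p hper'
    calc ∑ n ∈ Finset.range p, h (n + (c + 1))
        = ∑ n ∈ Finset.range p, h (n + 1 + c) := by
          apply Finset.sum_congr rfl
          intro n _
          congr 1
          omega
      _ = ∑ n ∈ Finset.range p, h (n + c) := hshift
      _ = ∑ n ∈ Finset.range p, h n := ih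

lemma periodic_add_mul (h : ℕ → ℚ) (c : ℕ) (hper : ∀ n, h (n + c) = h n) :
    ∀ (k n : ℕ), h (n + k * c) = h n := by
  intro k
  induction k with
  | zero => simp
  | succ k ih =>
    intro n
    rw [show n + (k + 1) * c = n + k * c + c by ring, hper, ih]

lemma periodic_sum_mul (h : ℕ → ℚ) (c : ℕ) (hper : ∀ n, h (n + c) = h n) (k : ℕ) :
    ∑ n ∈ Finset.range (k * c), h n = (k : ℚ) * ∑ n ∈ Finset.range c, h n := by
  induction k with
  | zero => simp
  | succ k ih =>
    rw [show (k + 1) * c = k * c + c by ring, Finset.sum_range_add, ih]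
    have : ∀ x ∈ Finset.range c, h (k * c + x) = h x := fun x _ => by
      rw [show k * c + x = x + k * c by omega, periodic_add_mul h c hper]
    rw [Finset.sum_congr rfl this]
    push_cast
    ring

/-! #### The key identification -/

lemma eps_eq_brk (D : SemidegreeData) (ψ : DPS) (p : ℕ) (hp : 0 < p)
    (hbdd : BddDenom p ψ) (ζ : ℂ) (hζ : IsPrimitiveRoot ζ p)
    (t : ℚ) (hrt : D.r ≤ t) (W : Finset ℚ)
    (hW : ∀ q, q ∈ W ↔ ψ.coeff q ≠ 0 ∧ q < -t)
    (hagree : ∀ q, q < -t → (D.phi - ψ).coeff q = 0)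
    (hlow : ∀ n : ℕ, t ≤ epsilonOf D (conjSer p (ζ ^ n) ψ)) (n : ℕ) :
    epsilonOf D (conjSer p (ζ ^ n) ψ) = brk t W n := by
  classical
  set θ := conjSer p (ζ ^ n) ψ with hθ
  have hsplit : ∀ q, (D.phi - θ).coeff q = (D.phi - ψ).coeff q + (ψ - θ).coeff q := by
    intro q
    rw [← HahnSeries.coeff_add, sub_add_sub_cancel]
  have hd := sub_conj_coeff_ne hp hbdd hζ n
  set A := W.filter fun q => ¬ ∃ m : ℤ, (n : ℚ) * q = (m : ℚ) with hA
  by_cases hAne : A.Nonempty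
  · set qs := A.min' hAne with hqs
    have hqsA : qs ∈ A := A.min'_mem hAne
    have hqsW : qs ∈ W := (Finset.mem_filter.mp hqsA).1
    have hqsP : ¬ ∃ m : ℤ, (n : ℚ) * qs = (m : ℚ) := (Finset.mem_filter.mp hqsA).2
    have hqsne : ψ.coeff qs ≠ 0 := ((hW qs).mp hqsW).1
    have hqslt : qs < -t := ((hW qs).mp hqsW).2
    have hcoeff_qs : (D.phi - θ).coeff qs ≠ 0 := by
      rw [hsplit, hagree qs hqslt, zero_add]
      exact (hd qs).mpr ⟨hqsne, hqsP⟩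
    have hbelow : ∀ q, q < qs → (D.phi - θ).coeff q = 0 := by
      intro q hq
      have hqlt : q < -t := hq.trans hqslt
      rw [hsplit, hagree q hqlt, zero_add]
      by_contra hne
      have hmem : q ∈ A := Finset.mem_filter.mpr ⟨(hW q).mpr ⟨((hd q).mp hne).1, hqlt⟩,
        ((hd q).mp hne).2⟩
      exact absurd (A.min'_le q hmem) (by rw [← hqs] at *; linarith)
    have hne0 : D.phi - θ ≠ 0 := fun h0 => hcoeff_qs (by rw [h0]; rfl)
    have horder : (D.phi - θ).order = qs :=
      le_antisymm (HahnSeries.order_le_of_coeff_ne_zero hcoeff_qs)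
        (order_ge_of_forall hne0 hbelow)
    have hdegx : degx (D.phi - θ) = -qs := by rw [degx, horder]
    rw [epsilonOf_eq, if_neg hne0, hdegx, brk, ← hA, dif_pos hAne, ← hqs,
      max_eq_left (by linarith)]
  · rw [brk, ← hA, dif_neg hAne]
    refine le_antisymm ?_ (hlow n)
    rw [epsilonOf_eq]
    split_ifs with h0
    · exact hrt
    · refine max_le ?_ hrt
      rw [degx_le_iff h0]
      intro q hq
      rw [hsplit, hagree q hq, zero_add]
      by_contra hne
      exact hAne ⟨q, Finset.mem_filter.mpr ⟨(hW q).mpr ⟨((hd q).mp hne).1, hq⟩,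
        ((hd q).mp hne).2⟩⟩

/-! #### Rational denominators -/

lemma den_dvd_of_eq_div {q : ℚ} {k : ℤ} {p : ℕ} (hp : 0 < p) (h : q = (k : ℚ) / (p : ℚ)) :
    q.den ∣ p := by
  have h2 : q = Rat.divInt k (p : ℤ) := by rw [Rat.divInt_eq_div, h]; norm_num
  have h3 := Rat.den_dvd k (p : ℤ)
  rw [← h2] at h3
  exact_mod_cast h3

lemma exists_int_of_den_dvd {q : ℚ} {c : ℕ} (h : q.den ∣ c) :
    ∃ m : ℤ, (c : ℚ) * q = (m : ℚ) := by
  obtain ⟨s, hs⟩ := h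
  refine ⟨q.num * s, ?_⟩
  have hden : ((q.den : ℚ)) ≠ 0 := Nat.cast_ne_zero.mpr q.den_nz
  have hq : q * (q.den : ℚ) = (q.num : ℚ) := by
    calc q * (q.den : ℚ) = ((q.num : ℚ) / (q.den : ℚ)) * (q.den : ℚ) := by
          rw [Rat.num_div_den]
      _ = (q.num : ℚ) := div_mul_cancel₀ _ hden
  rw [hs]
  push_cast
  calc (q.den : ℚ) * (s : ℚ) * q = (q * (q.den : ℚ)) * (s : ℚ) := by ring
    _ = (q.num : ℚ) * (s : ℚ) := by rw [hq]

/-! #### The per-series summary -/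

lemma sum_eps_eq_sum_brk (D : SemidegreeData) (ψ : DPS) (hψ : IsDPS ψ)
    (ζ : ℂ) (hζ : IsPrimitiveRoot ζ (polydromy ψ))
    (hne : (Finset.range (polydromy ψ)).Nonempty)
    (ε : ℚ) (hε : ε = (Finset.range (polydromy ψ)).inf' hne
      (fun j => epsilonOf D (conjSer (polydromy ψ) (ζ ^ (j + 1)) ψ))) :
    D.r ≤ ε ∧
    (∑ j ∈ Finset.range (polydromy ψ), epsilonOf D (conjSer (polydromy ψ) (ζ ^ (j + 1)) ψ))
      = (∑ n ∈ Finset.range (polydromy ψ),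
          brk ε (D.hfin.toFinset.filter fun q => q < -ε) n) ∧
    (∀ q : ℚ, D.phi.coeff q ≠ 0 → q < -ε → q.den ∣ polydromy ψ) := by
  classical
  have hp : 0 < polydromy ψ := Nat.pos_of_ne_zero (Finset.nonempty_range_iff.mp hne)
  obtain ⟨p0, hp0⟩ := hψ
  have hbddψ : BddDenom (polydromy ψ) ψ :=
    (Nat.sInf_mem (⟨p0, hp0⟩ : {p' : ℕ | 0 < p' ∧ BddDenom p' ψ}.Nonempty)).2
  have hζ0 : ζ ≠ 0 := fun h0 => by
    have h1 := hζ.pow_eq_one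
    rw [h0, zero_pow hp.ne'] at h1
    exact zero_ne_one h1
  set p := polydromy ψ with hpdef
  set G : ℕ → ℚ := fun a => epsilonOf D (conjSer p (ζ ^ a) ψ) with hG
  have hGper : ∀ a, G (a + p) = G a := fun a => by
    simp only [hG, _root_.pow_add, hζ.pow_eq_one, mul_one]
  have hGmul := periodic_add_mul G p hGper
  have hrε : D.r ≤ ε := by
    rw [hε]
    exact Finset.le_inf' _ _ (fun j _ => r_le_epsilonOf D _)
  obtain ⟨j₀, hj₀mem, hj₀⟩ := Finset.exists_mem_eq_inf' (H := hne)
    (fun j => epsilonOf D (conjSer p (ζ ^ (j + 1)) ψ))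
  have hεG : ε = G (j₀ + 1) := by rw [hε, hj₀]
  set χ := conjSer p (ζ ^ (j₀ + 1)) ψ with hχ
  have hconj : ∀ n : ℕ, conjSer p (ζ ^ n) χ = conjSer p (ζ ^ (n + (j₀ + 1))) ψ := fun n => by
    rw [hχ, conjSer_comp, ← _root_.pow_add]
  have hGχ : ∀ n : ℕ, epsilonOf D (conjSer p (ζ ^ n) χ) = G (n + (j₀ + 1)) := fun n => by
    rw [hconj n, hG]
  have hεle : ∀ n : ℕ, ε ≤ epsilonOf D (conjSer p (ζ ^ n) χ) := by
    intro n
    rw [hGχ n]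
    have hmod : (n + j₀) % p < p := Nat.mod_lt _ hp
    have hsplit : G (n + (j₀ + 1)) = G ((n + j₀) % p + 1) := by
      conv_lhs => rw [show n + (j₀ + 1) = ((n + j₀) % p + 1) + ((n + j₀) / p) * p by
        have h1 := Nat.div_add_mod (n + j₀) p
        have h2 : ((n + j₀) / p) * p = p * ((n + j₀) / p) := Nat.mul_comm _ _
        omega]
      exact hGmul _ _
    rw [hsplit, hε]
    exact Finset.inf'_le _ (Finset.mem_range.mpr hmod)
  have hεχ : epsilonOf D χ = ε := by rw [hεG, hχ, hG]
  have hagree : ∀ q, q < -ε → (D.phi - χ).coeff q = 0 := fun q hq =>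
    epsilonOf_coeff_zero (by rw [hεχ]; exact hq)
  have hz0 : (ζ : ℂ) ^ (j₀ + 1) ≠ 0 := pow_ne_zero _ hζ0
  have hsuppχ : ∀ q, χ.coeff q = 0 ↔ ψ.coeff q = 0 := fun q =>
    conjSer_coeff_eq_zero_iff hz0 ψ q
  have hbddχ : BddDenom p χ := fun q hq =>
    hbddψ q ((HahnSeries.mem_support ψ q).mpr
      (fun h0 => ((HahnSeries.mem_support χ q).mp hq) ((hsuppχ q).mpr h0)))
  have hWiff : ∀ q, q ∈ (D.hfin.toFinset.filter fun q => q < -ε) ↔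
      χ.coeff q ≠ 0 ∧ q < -ε := by
    intro q
    rw [Finset.mem_filter, Set.Finite.mem_toFinset, HahnSeries.mem_support]
    constructor
    · rintro ⟨h1, h2⟩
      have h3 := hagree q h2
      rw [HahnSeries.coeff_sub, sub_eq_zero] at h3
      rw [h3] at h1
      exact ⟨h1, h2⟩
    · rintro ⟨h1, h2⟩
      have h3 := hagree q h2
      rw [HahnSeries.coeff_sub, sub_eq_zero] at h3
      rw [← h3] at h1
      exact ⟨h1, h2⟩
  have hbrk : ∀ n, epsilonOf D (conjSer p (ζ ^ n) χ)
      = brk ε (D.hfin.toFinset.filter fun q => q < -ε) n :=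
    eps_eq_brk D χ p hp hbddχ ζ hζ ε hrε _ hWiff hagree hεle
  refine ⟨hrε, ?_, ?_⟩
  · calc (∑ j ∈ Finset.range p, epsilonOf D (conjSer p (ζ ^ (j + 1)) ψ))
        = ∑ j ∈ Finset.range p, G (j + 1) := rfl
      _ = ∑ j ∈ Finset.range p, G j := periodic_shift_one G p hGper
      _ = ∑ j ∈ Finset.range p, G (j + (j₀ + 1)) := (periodic_shift G p hGper (j₀ + 1)).symm
      _ = ∑ n ∈ Finset.range p, brk ε (D.hfin.toFinset.filter fun q => q < -ε) n := by
          apply Finset.sum_congr rfl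
          intro n _
          rw [← hbrk n, hGχ n]
  · intro q h1 h2
    have h3 := hagree q h2
    rw [HahnSeries.coeff_sub, sub_eq_zero] at h3
    have hχq : χ.coeff q ≠ 0 := by rw [← h3]; exact h1
    obtain ⟨k, hk⟩ := hbddχ q ((HahnSeries.mem_support χ q).mpr hχq)
    exact den_dvd_of_eq_div hp hk

end StmtAux

/-- Let `δ` be a semidegree with generic degree-wise Puiseux series
`φ(x) + ξ x^r`, let `ψ₁, ψ₂` be degree-wise Puiseux series and
`g_i = ∏_{ψ_{ij} conjugate of ψ_i} (y − ψ_{ij}(x))`.  Put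
`ε_{ij} = deg_x(φ + ξ x^r − ψ_{ij})` and `ε_i = min_j ε_{ij}`.  If `ε₁ ≥ ε₂` then
`δ(g₁)/deg_y(g₁) ≥ δ(g₂)/deg_y(g₂)`. -/
theorem semidegree_comparison (D : SemidegreeData) (ψ₁ ψ₂ : DPS)
    (h₁ : IsDPS ψ₁) (h₂ : IsDPS ψ₂)
    (hp₁ : (Finset.range (polydromy ψ₁)).Nonempty)
    (hp₂ : (Finset.range (polydromy ψ₂)).Nonempty)
    (ζ₁ ζ₂ : ℂ) (hζ₁ : IsPrimitiveRoot ζ₁ (polydromy ψ₁))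
    (hζ₂ : IsPrimitiveRoot ζ₂ (polydromy ψ₂))
    (g₁ g₂ : Polynomial DPS) (hg₁ : g₁ = allConjProd ζ₁ ψ₁) (hg₂ : g₂ = allConjProd ζ₂ ψ₂)
    (ε₁ ε₂ : ℚ)
    (hε₁ : ε₁ = (Finset.range (polydromy ψ₁)).inf' hp₁
      (fun j => epsilonOf D (conjSer (polydromy ψ₁) (ζ₁ ^ (j + 1)) ψ₁)))
    (hε₂ : ε₂ = (Finset.range (polydromy ψ₂)).inf' hp₂
      (fun j => epsilonOf D (conjSer (polydromy ψ₂) (ζ₂ ^ (j + 1)) ψ₂)))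
    (hle : ε₂ ≤ ε₁) :
    D.val g₂ / (g₂.natDegree : ℚ) ≤ D.val g₁ / (g₁.natDegree : ℚ) := by
  classical
  have hp1 : 0 < polydromy ψ₁ := Nat.pos_of_ne_zero (Finset.nonempty_range_iff.mp hp₁)
  have hp2 : 0 < polydromy ψ₂ := Nat.pos_of_ne_zero (Finset.nonempty_range_iff.mp hp₂)
  obtain ⟨hr1, hsum1, hden1⟩ := StmtAux.sum_eps_eq_sum_brk D ψ₁ h₁ ζ₁ hζ₁ hp₁ ε₁ hε₁
  obtain ⟨hr2, hsum2, hden2⟩ := StmtAux.sum_eps_eq_sum_brk D ψ₂ h₂ ζ₂ hζ₂ hp₂ ε₂ hε₂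
  rw [hg₁, hg₂, StmtAux.val_allConjProd, StmtAux.val_allConjProd,
    StmtAux.natDegree_allConjProd, StmtAux.natDegree_allConjProd, hsum1, hsum2]
  set p₁ := polydromy ψ₁ with hp₁def
  set p₂ := polydromy ψ₂ with hp₂def
  set W₁ := D.hfin.toFinset.filter (fun q => q < -ε₁) with hW₁
  set W₂ := D.hfin.toFinset.filter (fun q => q < -ε₂) with hW₂
  have hW12 : W₁ = W₂.filter fun q => q < -ε₁ := by
    rw [hW₁, hW₂, Finset.filter_filter]
    apply Finset.filter_congr
    intro q _
    constructor
    · intro h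
      exact ⟨by linarith, h⟩
    · rintro ⟨-, h⟩
      exact h
  have hsumle : ∑ n ∈ Finset.range p₂, StmtAux.brk ε₂ W₂ n
      ≤ ∑ n ∈ Finset.range p₂, StmtAux.brk ε₁ W₁ n :=
    Finset.sum_le_sum fun n _ =>
      StmtAux.brk_mono hle hW12 (fun q hq => (Finset.mem_filter.mp hq).2) n
  set pb := W₁.lcm (fun q => q.den) with hpb
  have hWd1 : ∀ q ∈ W₁, q.den ∣ p₁ := by
    intro q hq
    rw [hW₁, Finset.mem_filter, Set.Finite.mem_toFinset, HahnSeries.mem_support] at hq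
    exact hden1 q hq.1 hq.2
  have hWd2 : ∀ q ∈ W₁, q.den ∣ p₂ := by
    intro q hq
    rw [hW₁, Finset.mem_filter, Set.Finite.mem_toFinset, HahnSeries.mem_support] at hq
    exact hden2 q hq.1 (by linarith [hq.2])
  have hpb1 : pb ∣ p₁ := Finset.lcm_dvd hWd1
  have hpb2 : pb ∣ p₂ := Finset.lcm_dvd hWd2
  have hpbne : pb ≠ 0 := by
    intro h0
    rw [h0] at hpb1
    exact hp1.ne' (Nat.eq_zero_of_zero_dvd hpb1)
  have hpbpos : 0 < pb := Nat.pos_of_ne_zero hpbne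
  have hper : ∀ n, StmtAux.brk ε₁ W₁ (n + pb) = StmtAux.brk ε₁ W₁ n :=
    StmtAux.brk_periodic fun q hq => StmtAux.exists_int_of_den_dvd (Finset.dvd_lcm hq)
  set k₁ := p₁ / pb with hk₁def
  set k₂ := p₂ / pb with hk₂def
  have hk₁ : p₁ = k₁ * pb := (Nat.div_mul_cancel hpb1).symm
  have hk₂ : p₂ = k₂ * pb := (Nat.div_mul_cancel hpb2).symm
  set σ := ∑ n ∈ Finset.range pb, StmtAux.brk ε₁ W₁ n with hσ
  have hS1 : ∑ n ∈ Finset.range p₁, StmtAux.brk ε₁ W₁ n = (k₁ : ℚ) * σ := by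
    rw [hk₁]
    exact StmtAux.periodic_sum_mul _ pb hper k₁
  have hS2 : ∑ n ∈ Finset.range p₂, StmtAux.brk ε₁ W₁ n = (k₂ : ℚ) * σ := by
    rw [hk₂]
    exact StmtAux.periodic_sum_mul _ pb hper k₂
  have hp1Q : (0 : ℚ) < (p₁ : ℚ) := by exact_mod_cast hp1
  have hp2Q : (0 : ℚ) < (p₂ : ℚ) := by exact_mod_cast hp2
  rw [div_le_div_iff₀ hp2Q hp1Q]
  have hptn : (0 : ℚ) ≤ (D.ptilde : ℚ) := by positivity
  have hS2le : ∑ n ∈ Finset.range p₂, StmtAux.brk ε₂ W₂ n ≤ (k₂ : ℚ) * σ := by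
    rw [← hS2]
    exact hsumle
  have e1 : (p₁ : ℚ) = (k₁ : ℚ) * (pb : ℚ) := by exact_mod_cast hk₁
  have e2 : (p₂ : ℚ) = (k₂ : ℚ) * (pb : ℚ) := by exact_mod_cast hk₂
  calc (D.ptilde : ℚ) * (∑ n ∈ Finset.range p₂, StmtAux.brk ε₂ W₂ n) * (p₁ : ℚ)
      ≤ (D.ptilde : ℚ) * ((k₂ : ℚ) * σ) * (p₁ : ℚ) :=
        mul_le_mul_of_nonneg_right (mul_le_mul_of_nonneg_left hS2le hptn) hp1Q.le
    _ = (D.ptilde : ℚ) * ((k₁ : ℚ) * σ) * (p₂ : ℚ) := by rw [e1, e2]; ring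
    _ = (D.ptilde : ℚ) * (∑ n ∈ Finset.range p₁, StmtAux.brk ε₁ W₁ n) * (p₂ : ℚ) := by
        rw [hS1]

end
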